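/- Fix m>0, 0<q<p, N≥2, λ_i = (p/q)^i, w(n) = Γ(n+m/2)/(n! Γ(m/2)), and for K∈ℕ let μ^K be the probability measure on A_K = {η∈ℕ^N : ∑_{i=1}^N η_i = K} with μ^K(η) proportional to ∏_{i=1}^N w(η_i) λ_i^{η_i}. Then for every δ∈(0,1) there exist constants C>0 and r∈(0,1) such that μ^K(η_N ≤ (1−δ)K) ≤ C r^{δK} for all K; in particular μ^K(η_N ≤ (1−δ)K) → 0 as K→∞. -/

import Mathlib

open Filter Topology

/-- The weights `w(n) = Γ(n+m/2)/(n! Γ(m/2))`. -/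
noncomputable def asipW (m : ℝ) (n : ℕ) : ℝ :=
  Real.Gamma (n + m / 2) / (n.factorial * Real.Gamma (m / 2))

/-- `λ_i = (p/q)^i` for site `i ∈ {1,…,N}` (here `i : Fin N` represents site `i+1`). -/
noncomputable def asipLam (p q : ℝ) {N : ℕ} (i : Fin N) : ℝ := (p / q) ^ ((i : ℕ) + 1)

/-- The canonical weight `∏_{i=1}^N w(η_i) λ_i^{η_i}` of a configuration `η`. -/
noncomputable def asipWeight (m p q : ℝ) {N : ℕ} (η : Fin N → ℕ) : ℝ :=
  ∏ i, asipW m (η i) * asipLam p q i ^ (η i)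

/-- The canonical partition function `Z(K) = ∑_{η ∈ A_K} ∏_i w(η_i) λ_i^{η_i}`. -/
noncomputable def asipZ (m p q : ℝ) (N K : ℕ) : ℝ :=
  ∑' η : {η : Fin N → ℕ // ∑ i, η i = K}, asipWeight m p q η.1

lemma asipW_pos {m : ℝ} (hm : 0 < m) (n : ℕ) : 0 < asipW m n := by
  unfold asipW
  apply div_pos (Real.Gamma_pos_of_pos (by positivity))
  exact mul_pos (by exact_mod_cast n.factorial_pos) (Real.Gamma_pos_of_pos (by positivity))

lemma asipW_zero {m : ℝ} (hm : 0 < m) : asipW m 0 = 1 := by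
  unfold asipW
  rw [Nat.cast_zero, zero_add, Nat.factorial_zero, Nat.cast_one, one_mul, div_self]
  exact (Real.Gamma_pos_of_pos (by positivity)).ne'

lemma asipW_succ {m : ℝ} (hm : 0 < m) (n : ℕ) :
    asipW m (n + 1) = asipW m n * (((n : ℝ) + m / 2) / ((n : ℝ) + 1)) := by
  unfold asipW
  have h0 : (0:ℝ) < (n:ℝ) + m / 2 := by positivity
  have h1 : ((n + 1 : ℕ) : ℝ) + m / 2 = ((n : ℝ) + m / 2) + 1 := by push_cast; ring
  rw [h1, Real.Gamma_add_one h0.ne', Nat.factorial_succ]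
  have hf : (0:ℝ) < (n.factorial : ℝ) := by exact_mod_cast n.factorial_pos
  have hg : (0:ℝ) < Real.Gamma (m / 2) := Real.Gamma_pos_of_pos (by positivity)
  push_cast
  field_simp

lemma asipW_merge {m : ℝ} (hm : 0 < m) (c : ℕ) (hc : m / 2 ≤ (c : ℝ) + 1) :
    ∀ a b : ℕ, asipW m a * asipW m b ≤ asipW m (a + b) * ((a : ℝ) + 1) ^ c := by
  intro a
  induction a with
  | zero => intro b; simp [asipW_zero hm]
  | succ a ih =>
    intro b
    have hs : 0 < m / 2 := by linarith
    have key : ((a : ℝ) + m / 2) / ((a : ℝ) + 1) * ((a : ℝ) + 1) ^ c ≤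
        (((a : ℝ) + (b : ℝ)) + m / 2) / (((a : ℝ) + (b : ℝ)) + 1) * ((a : ℝ) + 2) ^ c := by
      rcases le_or_gt (m / 2) 1 with h1 | h1
      · have t1 : ((a : ℝ) + m / 2) / ((a : ℝ) + 1) ≤
            (((a : ℝ) + (b : ℝ)) + m / 2) / (((a : ℝ) + (b : ℝ)) + 1) := by
          rw [div_le_div_iff₀ (by positivity) (by positivity)]
          nlinarith [Nat.cast_nonneg (α := ℝ) b]
        have t2 : ((a : ℝ) + 1) ^ c ≤ ((a : ℝ) + 2) ^ c :=
          pow_le_pow_left₀ (by positivity) (by linarith) c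
        exact mul_le_mul t1 t2 (by positivity) (by positivity)
      · have hb : (0:ℝ) ≤ (b : ℝ) := Nat.cast_nonneg b
        have hx : (-2:ℝ) ≤ 1 / ((a:ℝ)+1) :=
          le_trans (by norm_num) (by positivity : (0:ℝ) ≤ 1/((a:ℝ)+1))
        have bern : 1 + (c : ℝ) * (1 / ((a : ℝ) + 1)) ≤ (1 + 1 / ((a : ℝ) + 1)) ^ c :=
          one_add_mul_le_pow hx c
        have e : ((1 : ℝ) + 1 / ((a : ℝ) + 1)) ^ c * ((a : ℝ) + 1) ^ c = ((a : ℝ) + 2) ^ c := by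
          rw [← mul_pow]
          congr 1
          field_simp; ring
        have t1 : ((a : ℝ) + m / 2) / ((a : ℝ) + 1) * ((a : ℝ) + 1) ^ c ≤ ((a : ℝ) + 2) ^ c := by
          rw [← e]
          apply mul_le_mul_of_nonneg_right _ (by positivity)
          rw [div_le_iff₀ (by positivity)]
          have : (1 + (c : ℝ) * (1 / ((a : ℝ) + 1))) * ((a:ℝ)+1) = (a:ℝ) + 1 + c := by
            field_simp
          nlinarith [mul_le_mul_of_nonneg_right bern (by positivity : (0:ℝ) ≤ (a:ℝ)+1)]
        have t2 : (1:ℝ) ≤ (((a : ℝ) + (b : ℝ)) + m / 2) / (((a : ℝ) + (b : ℝ)) + 1) := by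
          rw [le_div_iff₀ (by positivity)]
          linarith
        calc ((a : ℝ) + m / 2) / ((a : ℝ) + 1) * ((a : ℝ) + 1) ^ c ≤ ((a : ℝ) + 2) ^ c := t1
          _ ≤ (((a : ℝ) + (b : ℝ)) + m / 2) / (((a : ℝ) + (b : ℝ)) + 1) * ((a : ℝ) + 2) ^ c := by
              nlinarith [pow_pos (by positivity : (0:ℝ) < (a:ℝ)+2) c]
    have hab : a + 1 + b = (a + b) + 1 := by omega
    rw [asipW_succ hm a, hab, asipW_succ hm (a + b)]
    have hcast : ((a + b : ℕ) : ℝ) = (a : ℝ) + (b : ℝ) := by push_cast; ring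
    rw [hcast]
    have hw : 0 ≤ asipW m (a + b) := (asipW_pos hm _).le
    have step1 : asipW m a * asipW m b * (((a:ℝ) + m/2) / ((a:ℝ)+1)) ≤
        asipW m (a + b) * ((a:ℝ)+1)^c * (((a:ℝ) + m/2) / ((a:ℝ)+1)) :=
      mul_le_mul_of_nonneg_right (ih b) (by positivity)
    calc asipW m a * (((a:ℝ) + m/2) / ((a:ℝ)+1)) * asipW m b
        = asipW m a * asipW m b * (((a:ℝ) + m/2) / ((a:ℝ)+1)) := by ring
      _ ≤ asipW m (a + b) * ((a:ℝ)+1)^c * (((a:ℝ) + m/2) / ((a:ℝ)+1)) := step1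
      _ = asipW m (a + b) * ((((a:ℝ) + m/2) / ((a:ℝ)+1)) * ((a:ℝ)+1)^c) := by ring
      _ ≤ asipW m (a + b) * ((((a:ℝ) + (b:ℝ) + m/2) / ((a:ℝ)+(b:ℝ)+1)) * ((a:ℝ)+2)^c) :=
          mul_le_mul_of_nonneg_left key hw
      _ = asipW m (a + b) * (((a:ℝ)+(b:ℝ) + m/2) / ((a:ℝ)+(b:ℝ)+1)) * (((a+1:ℕ):ℝ)+1)^c := by
          push_cast; ring

lemma asipW_prod {m : ℝ} (hm : 0 < m) (c : ℕ) (hc : m / 2 ≤ (c : ℝ) + 1) {ι : Type*}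
    (t : Finset ι) (η : ι → ℕ) :
    ∏ i ∈ t, asipW m (η i) ≤
      asipW m (∑ i ∈ t, η i) * (((∑ i ∈ t, η i : ℕ) : ℝ) + 1) ^ (c * t.card) := by
  classical
  induction t using Finset.cons_induction with
  | empty => simp [asipW_zero hm]
  | cons a t ha ih =>
    rw [Finset.prod_cons, Finset.sum_cons, Finset.card_cons]
    set S := ∑ i ∈ t, η i with hS
    have hle1 : ((η a : ℝ) + 1) ≤ (((η a + S : ℕ) : ℝ) + 1) := by
      push_cast; simp
    have hle2 : ((S : ℝ) + 1) ≤ (((η a + S : ℕ) : ℝ) + 1) := by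
      push_cast; simp
    calc asipW m (η a) * ∏ i ∈ t, asipW m (η i)
        ≤ asipW m (η a) * (asipW m S * ((S : ℝ) + 1) ^ (c * t.card)) :=
          mul_le_mul_of_nonneg_left ih (asipW_pos hm _).le
      _ = (asipW m (η a) * asipW m S) * ((S : ℝ) + 1) ^ (c * t.card) := by ring
      _ ≤ (asipW m (η a + S) * ((η a : ℝ) + 1) ^ c) * ((S : ℝ) + 1) ^ (c * t.card) :=
          mul_le_mul_of_nonneg_right (asipW_merge hm c hc _ _) (by positivity)
      _ ≤ (asipW m (η a + S) * (((η a + S : ℕ) : ℝ) + 1) ^ c) *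
            (((η a + S : ℕ) : ℝ) + 1) ^ (c * t.card) := by
          have h1 : ((η a : ℝ) + 1) ^ c ≤ (((η a + S : ℕ) : ℝ) + 1) ^ c :=
            pow_le_pow_left₀ (by positivity) hle1 c
          have h2 : ((S : ℝ) + 1) ^ (c * t.card) ≤ (((η a + S : ℕ) : ℝ) + 1) ^ (c * t.card) :=
            pow_le_pow_left₀ (by positivity) hle2 _
          have hw : 0 ≤ asipW m (η a + S) := (asipW_pos hm _).le
          apply mul_le_mul (mul_le_mul_of_nonneg_left h1 hw) h2 (by positivity) (by positivity)
      _ = asipW m (η a + S) * (((η a + S : ℕ) : ℝ) + 1) ^ (c * (t.card + 1)) := by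
          rw [show c * (t.card + 1) = c + c * t.card by ring, pow_add]; ring

lemma asipWeight_nonneg {m p q : ℝ} (hm : 0 < m) (hq : 0 < q) (hp : 0 < p) {N : ℕ}
    (η : Fin N → ℕ) : 0 ≤ asipWeight m p q η := by
  refine Finset.prod_nonneg fun i _ => mul_nonneg (asipW_pos hm _).le ?_
  exact pow_nonneg (pow_nonneg (div_nonneg hp.le hq.le) _) _

set_option maxHeartbeats 1600000 in
lemma asip_key (m p q : ℝ) (hm : 0 < m) (hq : 0 < q) (hpq : q < p)
    (M : ℕ) (δ : ℝ) (hδ0 : 0 < δ) (hδ1 : δ < 1) (c : ℕ) (hc : m / 2 ≤ (c : ℝ) + 1)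
    (K : ℕ) :
    (∑' η : {η : Fin (M + 2) → ℕ //
        (∑ i, η i = K) ∧ ((η ⟨M + 2 - 1, by omega⟩ : ℕ) : ℝ) ≤ (1 - δ) * K},
      asipWeight m p q η.1) / asipZ m p q (M + 2) K ≤
    ((K : ℝ) + 1) ^ ((M + 2) + c * (M + 2)) * (q / p) ^ (δ * (K : ℝ)) := by
  classical
  have hp : 0 < p := hq.trans hpq
  have hβ1 : 1 < p / q := (one_lt_div hq).2 hpq
  have hβ0 : 0 < p / q := by positivity
  set L : Fin (M + 2) := ⟨M + 2 - 1, by omega⟩ with hL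
  -- finiteness
  have hfinset : {η : Fin (M + 2) → ℕ | ∑ i, η i = K}.Finite := by
    refine Set.Finite.subset (Set.Finite.pi (fun i : Fin (M + 2) => Set.finite_Iic K)) ?_
    intro η hη
    rw [Set.mem_pi]
    intro i _
    exact Set.mem_Iic.2 (le_of_le_of_eq
      (Finset.single_le_sum (fun j _ => Nat.zero_le (η j)) (Finset.mem_univ i)) hη)
  letI fin0 : Fintype {η : Fin (M + 2) → ℕ // ∑ i, η i = K} := hfinset.fintype
  letI fin1 : Fintype {η : Fin (M + 2) → ℕ //
      (∑ i, η i = K) ∧ ((η L : ℕ) : ℝ) ≤ (1 - δ) * K} :=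
    (hfinset.subset (fun η hη => hη.1)).fintype
  have hZrw : asipZ m p q (M + 2) K =
      ∑ η : {η : Fin (M + 2) → ℕ // ∑ i, η i = K}, asipWeight m p q η.1 := by
    rw [asipZ]; exact tsum_fintype _
  have hNrw : (∑' η : {η : Fin (M + 2) → ℕ //
        (∑ i, η i = K) ∧ ((η L : ℕ) : ℝ) ≤ (1 - δ) * K}, asipWeight m p q η.1) =
      ∑ η : {η : Fin (M + 2) → ℕ //
        (∑ i, η i = K) ∧ ((η L : ℕ) : ℝ) ≤ (1 - δ) * K}, asipWeight m p q η.1 :=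
    tsum_fintype _
  -- bound on each term of the numerator
  set B : ℝ := asipW m K * ((K : ℝ) + 1) ^ (c * (M + 2)) * (p / q) ^ ((M + 2) * K) *
      (q / p) ^ (δ * (K : ℝ)) with hB
  have hBnonneg : 0 ≤ B := by
    have := (asipW_pos hm K).le
    positivity
  have term_bound : ∀ η : {η : Fin (M + 2) → ℕ //
      (∑ i, η i = K) ∧ ((η L : ℕ) : ℝ) ≤ (1 - δ) * K},
      asipWeight m p q η.1 ≤ B := by
    rintro ⟨η, hsum, hlast⟩
    have h1 := Finset.sum_erase_add Finset.univ η (Finset.mem_univ L)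
    have hd : ∑ i ∈ Finset.univ.erase L, η i + η L = K := by rw [h1, hsum]
    have hηL : η L ≤ K := by omega
    -- exponent bound
    have hE : (∑ i : Fin (M + 2), ((i : ℕ) + 1) * η i) ≤ (M + 1) * K + η L := by
      have h2 : ∑ i : Fin (M + 2), ((i : ℕ) + 1) * η i =
          (∑ i ∈ Finset.univ.erase L, ((i : ℕ) + 1) * η i) + ((L : ℕ) + 1) * η L :=
        (Finset.sum_erase_add _ _ (Finset.mem_univ L)).symm
      have h3 : ∑ i ∈ Finset.univ.erase L, ((i : ℕ) + 1) * η i ≤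
          (M + 1) * ∑ i ∈ Finset.univ.erase L, η i := by
        rw [Finset.mul_sum]
        refine Finset.sum_le_sum fun i hi => ?_
        have hne : i ≠ L := (Finset.mem_erase.1 hi).1
        have hiv : (i : ℕ) < M + 2 := i.isLt
        have : (i : ℕ) + 1 ≤ M + 1 := by
          by_contra hcon
          exact hne (Fin.ext (by simp only [hL]; omega))
        exact Nat.mul_le_mul_right _ this
      have h4 : (M + 1) * (∑ i ∈ Finset.univ.erase L, η i) + ((L : ℕ) + 1) * η L =
          (M + 1) * K + η L := by
        have hLv : (L : ℕ) + 1 = M + 2 := by simp [hL]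
        have hs' : ∑ i ∈ Finset.univ.erase L, η i = K - η L := by omega
        rw [hs', hLv]
        obtain ⟨d, rfl⟩ : ∃ d, K = η L + d := ⟨K - η L, by omega⟩
        rw [Nat.add_sub_cancel_left]
        ring
      rw [h2]
      exact le_trans (Nat.add_le_add_right h3 _) (le_of_eq h4)
    have hWsum : ∏ i, asipW m (η i) ≤ asipW m K * ((K : ℝ) + 1) ^ (c * (M + 2)) := by
      have h := asipW_prod hm c hc Finset.univ η
      rw [hsum] at h
      simpa using h
    have hprod_lam : (∏ i, asipLam p q i ^ η i) =
        (p / q) ^ (∑ i : Fin (M + 2), ((i : ℕ) + 1) * η i) := by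
      simp_rw [asipLam, ← pow_mul]
      rw [Finset.prod_pow_eq_pow_sum]
    have hlam : (p / q) ^ (∑ i : Fin (M + 2), ((i : ℕ) + 1) * η i) ≤
        (p / q) ^ ((M + 2) * K) * (q / p) ^ (δ * (K : ℝ)) := by
      calc (p / q) ^ (∑ i : Fin (M + 2), ((i : ℕ) + 1) * η i)
          ≤ (p / q) ^ ((M + 1) * K + η L) := pow_le_pow_right₀ hβ1.le hE
        _ = (p / q) ^ ((M + 1) * K) * (p / q) ^ (η L) := pow_add _ _ _
        _ ≤ (p / q) ^ ((M + 1) * K) * ((p / q) ^ ((1 - δ) * (K : ℝ)) : ℝ) := by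
            refine mul_le_mul_of_nonneg_left ?_ (by positivity)
            rw [← Real.rpow_natCast (p / q) (η L)]
            exact Real.rpow_le_rpow_of_exponent_le hβ1.le hlast
        _ = (p / q) ^ ((M + 2) * K) * (q / p) ^ (δ * (K : ℝ)) := by
            rw [show (1 - δ) * (K : ℝ) = (K : ℝ) + (-(δ * (K : ℝ))) by ring,
              Real.rpow_add hβ0, Real.rpow_natCast,
              Real.rpow_neg hβ0.le, ← Real.inv_rpow hβ0.le, inv_div,
              show (M + 2) * K = (M + 1) * K + K by ring, pow_add]
            ring
    have hsplit : asipWeight m p q η =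
        (∏ i, asipW m (η i)) * ∏ i, asipLam p q i ^ η i := by
      rw [asipWeight, Finset.prod_mul_distrib]
    rw [hsplit, hprod_lam, hB]
    have hws : 0 ≤ (p / q) ^ (∑ i : Fin (M + 2), ((i : ℕ) + 1) * η i) := by positivity
    calc (∏ i, asipW m (η i)) * (p / q) ^ (∑ i : Fin (M + 2), ((i : ℕ) + 1) * η i)
        ≤ (asipW m K * ((K : ℝ) + 1) ^ (c * (M + 2))) *
            ((p / q) ^ ((M + 2) * K) * (q / p) ^ (δ * (K : ℝ))) := by
          refine mul_le_mul hWsum hlam hws ?_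
          have := (asipW_pos hm K).le
          positivity
      _ = asipW m K * ((K : ℝ) + 1) ^ (c * (M + 2)) * (p / q) ^ ((M + 2) * K) *
            (q / p) ^ (δ * (K : ℝ)) := by ring
  -- cardinality bound
  have hcardN : Fintype.card {η : Fin (M + 2) → ℕ //
      (∑ i, η i = K) ∧ ((η L : ℕ) : ℝ) ≤ (1 - δ) * K} ≤ (K + 1) ^ (M + 2) := by
    have hinj : Function.Injective
        (fun (x : {η : Fin (M + 2) → ℕ //
          (∑ i, η i = K) ∧ ((η L : ℕ) : ℝ) ≤ (1 - δ) * K}) (i : Fin (M + 2)) =>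
          (⟨x.1 i, Nat.lt_succ_of_le (le_of_le_of_eq
            (Finset.single_le_sum (fun j _ => Nat.zero_le (x.1 j)) (Finset.mem_univ i))
            x.2.1)⟩ : Fin (K + 1))) := by
      intro x y hxy
      apply Subtype.ext; funext i
      have := congrFun hxy i
      simpa [Fin.mk.injEq] using this
    calc Fintype.card {η : Fin (M + 2) → ℕ //
          (∑ i, η i = K) ∧ ((η L : ℕ) : ℝ) ≤ (1 - δ) * K}
        ≤ Fintype.card (Fin (M + 2) → Fin (K + 1)) := Fintype.card_le_of_injective _ hinj
      _ = (K + 1) ^ (M + 2) := by simp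
  -- numerator bound
  have hnum : (∑ η : {η : Fin (M + 2) → ℕ //
      (∑ i, η i = K) ∧ ((η L : ℕ) : ℝ) ≤ (1 - δ) * K}, asipWeight m p q η.1) ≤
      ((K : ℝ) + 1) ^ (M + 2) * B := by
    calc (∑ η : {η : Fin (M + 2) → ℕ //
          (∑ i, η i = K) ∧ ((η L : ℕ) : ℝ) ≤ (1 - δ) * K}, asipWeight m p q η.1)
        ≤ (Fintype.card {η : Fin (M + 2) → ℕ //
            (∑ i, η i = K) ∧ ((η L : ℕ) : ℝ) ≤ (1 - δ) * K}) • B :=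
          Finset.sum_le_card_nsmul _ _ _ (fun x _ => term_bound x)
      _ = (Fintype.card {η : Fin (M + 2) → ℕ //
            (∑ i, η i = K) ∧ ((η L : ℕ) : ℝ) ≤ (1 - δ) * K} : ℝ) * B := nsmul_eq_mul _ _
      _ ≤ ((K : ℝ) + 1) ^ (M + 2) * B := by
          refine mul_le_mul_of_nonneg_right ?_ hBnonneg
          calc (Fintype.card {η : Fin (M + 2) → ℕ //
              (∑ i, η i = K) ∧ ((η L : ℕ) : ℝ) ≤ (1 - δ) * K} : ℝ)
              ≤ (((K + 1) ^ (M + 2) : ℕ) : ℝ) := by exact_mod_cast hcardN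
            _ = ((K : ℝ) + 1) ^ (M + 2) := by push_cast; ring
  -- partition function lower bound
  have hLv : (L : ℕ) + 1 = M + 2 := by simp [hL]
  have hZlow : asipW m K * (p / q) ^ ((M + 2) * K) ≤ asipZ m p q (M + 2) K := by
    rw [hZrw]
    have hstar : ∑ i, (if i = L then K else 0) = K := by
      rw [Finset.sum_ite_eq' Finset.univ L (fun _ => K)]
      simp
    have heval : asipWeight m p q (fun i => if i = L then K else 0) =
        asipW m K * (p / q) ^ ((M + 2) * K) := by
      rw [asipWeight, Finset.prod_eq_single L]
      · simp only [eq_self_iff_true, if_true]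
        rw [asipLam, ← pow_mul, hLv]
      · intro i _ hne
        simp [if_neg hne, asipW_zero hm, asipLam]
      · intro h; exact absurd (Finset.mem_univ L) h
    have h2 := Finset.single_le_sum (f := fun η : {η : Fin (M + 2) → ℕ // ∑ i, η i = K} =>
        asipWeight m p q η.1)
        (fun x _ => asipWeight_nonneg hm hq hp x.1)
        (Finset.mem_univ (⟨fun i => if i = L then K else 0, hstar⟩ :
          {η : Fin (M + 2) → ℕ // ∑ i, η i = K}))
    rw [← heval]
    exact h2
  have hZpos : 0 < asipZ m p q (M + 2) K := by
    refine lt_of_lt_of_le ?_ hZlow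
    have := asipW_pos hm K
    positivity
  -- conclude
  rw [div_le_iff₀ hZpos, hNrw]
  calc (∑ η : {η : Fin (M + 2) → ℕ //
        (∑ i, η i = K) ∧ ((η L : ℕ) : ℝ) ≤ (1 - δ) * K}, asipWeight m p q η.1)
      ≤ ((K : ℝ) + 1) ^ (M + 2) * B := hnum
    _ = (((K : ℝ) + 1) ^ ((M + 2) + c * (M + 2)) * (q / p) ^ (δ * (K : ℝ))) *
          (asipW m K * (p / q) ^ ((M + 2) * K)) := by
        rw [hB, pow_add]; ring
    _ ≤ (((K : ℝ) + 1) ^ ((M + 2) + c * (M + 2)) * (q / p) ^ (δ * (K : ℝ))) *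
          asipZ m p q (M + 2) K := by
        refine mul_le_mul_of_nonneg_left hZlow ?_
        positivity

/-- **Condensation in the ASIP, part b)**: under the canonical measure
`μ^K(η) ∝ ∏_i w(η_i) λ_i^{η_i}`, for every `δ ∈ (0,1)` there are `C > 0` and `r ∈ (0,1)`
with `μ^K(η_N ≤ (1−δ)K) ≤ C r^{δK}` for all `K`; in particular
`μ^K(η_N ≤ (1−δ)K) → 0` as `K → ∞`. -/
theorem asip_condensation_tail_bound
    (m p q : ℝ) (hm : 0 < m) (hq : 0 < q) (hpq : q < p)
    (N : ℕ) (hN : 2 ≤ N) (δ : ℝ) (hδ : δ ∈ Set.Ioo (0 : ℝ) 1) :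
    ∃ C > (0 : ℝ), ∃ r ∈ Set.Ioo (0 : ℝ) 1,
      (∀ K : ℕ,
        (∑' η : {η : Fin N → ℕ //
            (∑ i, η i = K) ∧ ((η ⟨N - 1, by omega⟩ : ℕ) : ℝ) ≤ (1 - δ) * K},
          asipWeight m p q η.1) / asipZ m p q N K ≤ C * r ^ (δ * K)) ∧
      Tendsto
        (fun K : ℕ =>
          (∑' η : {η : Fin N → ℕ //
              (∑ i, η i = K) ∧ ((η ⟨N - 1, by omega⟩ : ℕ) : ℝ) ≤ (1 - δ) * K},
            asipWeight m p q η.1) / asipZ m p q N K)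
        atTop (𝓝 0) := by
  obtain ⟨M, rfl⟩ : ∃ M, N = M + 2 := ⟨N - 2, by omega⟩
  obtain ⟨hδ0, hδ1⟩ := hδ
  have hp : 0 < p := hq.trans hpq
  set c : ℕ := ⌈m / 2⌉₊ with hcdef
  have hc : m / 2 ≤ (c : ℝ) + 1 := by
    have := Nat.le_ceil (m / 2)
    linarith
  set D : ℕ := (M + 2) + c * (M + 2) with hD
  have hρ0 : 0 < q / p := by positivity
  have hρ1 : q / p < 1 := (div_lt_one hp).2 hpq
  set r : ℝ := Real.sqrt (q / p) with hrdef
  have hr0 : 0 < r := Real.sqrt_pos.2 hρ0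
  have hr1 : r < 1 := by
    rw [hrdef, show (1 : ℝ) = Real.sqrt 1 from Real.sqrt_one.symm]
    exact Real.sqrt_lt_sqrt hρ0.le (by linarith)
  set x : ℝ := r ^ δ with hx
  have hx0 : 0 < x := Real.rpow_pos_of_pos hr0 δ
  have hx1 : x < 1 := Real.rpow_lt_one hr0.le hr1 hδ0
  have hrx : ∀ K : ℕ, r ^ (δ * (K : ℝ)) = x ^ K := by
    intro K
    rw [hx, ← Real.rpow_natCast (r ^ δ) K, ← Real.rpow_mul hr0.le]
  have hgt : Tendsto (fun K : ℕ => ((K : ℝ) + 1) ^ D * x ^ K) atTop (𝓝 0) := by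
    have h1 : Tendsto (fun n : ℕ => (n : ℝ) ^ D * x ^ n) atTop (𝓝 0) :=
      tendsto_pow_const_mul_const_pow_of_abs_lt_one D (by rwa [abs_of_pos hx0])
    have h2 := (h1.comp (tendsto_add_atTop_nat 1)).mul_const x⁻¹
    rw [zero_mul] at h2
    refine h2.congr fun n => ?_
    simp only [Function.comp_apply]
    rw [pow_succ]
    push_cast
    field_simp
  obtain ⟨C₀, hC₀⟩ := hgt.bddAbove_range
  have hC₀le : ∀ K : ℕ, ((K : ℝ) + 1) ^ D * x ^ K ≤ C₀ := fun K => hC₀ (Set.mem_range_self K)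
  have hCpos : (0 : ℝ) < max C₀ 1 := lt_of_lt_of_le one_pos (le_max_right _ _)
  have main : ∀ K : ℕ, ((K : ℝ) + 1) ^ D * (q / p) ^ (δ * (K : ℝ)) ≤
      max C₀ 1 * r ^ (δ * (K : ℝ)) := by
    intro K
    have hρr : (q / p : ℝ) ^ (δ * (K : ℝ)) = r ^ (δ * (K : ℝ)) * r ^ (δ * (K : ℝ)) := by
      rw [← Real.mul_rpow (Real.sqrt_nonneg _) (Real.sqrt_nonneg _),
        Real.mul_self_sqrt hρ0.le]
    calc ((K : ℝ) + 1) ^ D * (q / p) ^ (δ * (K : ℝ))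
        = (((K : ℝ) + 1) ^ D * r ^ (δ * (K : ℝ))) * r ^ (δ * (K : ℝ)) := by
          rw [hρr]; ring
      _ ≤ max C₀ 1 * r ^ (δ * (K : ℝ)) := by
          refine mul_le_mul_of_nonneg_right ?_ (Real.rpow_nonneg hr0.le _)
          rw [hrx K]
          exact (hC₀le K).trans (le_max_left _ _)
  have key := fun K => asip_key m p q hm hq hpq M δ hδ0 hδ1 c hc K
  refine ⟨max C₀ 1, hCpos, r, ⟨hr0, hr1⟩, fun K => (key K).trans (main K), ?_⟩
  apply squeeze_zero (g := fun K : ℕ => max C₀ 1 * r ^ (δ * (K : ℝ)))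
  · intro K
    refine div_nonneg (tsum_nonneg fun y => asipWeight_nonneg hm hq hp y.1) ?_
    rw [asipZ]
    exact tsum_nonneg fun y => asipWeight_nonneg hm hq hp y.1
  · intro K
    exact (key K).trans (main K)
  · have h3 : Tendsto (fun K : ℕ => max C₀ 1 * x ^ K) atTop (𝓝 0) := by
      have := (tendsto_pow_atTop_nhds_zero_of_lt_one hx0.le hx1).const_mul (max C₀ 1)
      simpa using this
    refine h3.congr fun K => ?_
    rw [hrx K]
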